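/- arXiv:2011.13732 — 2 statements merged into one kernel-verified Lean document; each statement's English description precedes it below -/
import Mathlib

section
/- Let F ∈ ℝ[x_1,…,x_n] be a homogeneous polynomial of degree s, let A_F = ℝ[∂_1,…,∂_n]/Ann(F), and fix an integer k with 0 ≤ k ≤ s/2. Let Λ_k = {e_1,…,e_m} be homogeneous degree-k elements of ℝ[∂_1,…,∂_n] whose images form a basis of the degree-k component (A_F)_k, and let H^k_F = (e_i e_j F)_{1≤i,j≤m} be the k-th Hessian matrix of F with respect to Λ_k (a matrix of polynomials in x_1,…,x_n). Then for a = (a_1,…,a_n) ∈ ℝ^n and ℓ_a = a_1∂_1 + ⋯ + a_n∂_n, the multiplication map ×ℓ_a^{s−2k} : (A_F)_k → (A_F)_{s−k} is bijective if and only if det H^k_F(a) ≠ 0. -/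
open MvPolynomial

noncomputable section

lemma pderiv_commute {n : ℕ} (i j : Fin n) (f : MvPolynomial (Fin n) ℝ) :
    pderiv i (pderiv j f) = pderiv j (pderiv i f) := by
  rcases eq_or_ne i j with rfl | hij
  · rfl
  · induction f using MvPolynomial.induction_on' with
    | monomial m a =>
        simp only [pderiv_monomial]
        have h1 : (m - Finsupp.single j 1 : Fin n →₀ ℕ) i = m i := by
          rw [Finsupp.tsub_apply, Finsupp.single_eq_of_ne' hij.symm, tsub_zero]
        have h2 : (m - Finsupp.single i 1 : Fin n →₀ ℕ) j = m j := by
          rw [Finsupp.tsub_apply, Finsupp.single_eq_of_ne' hij, tsub_zero]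
        rw [h1, h2, tsub_right_comm]
        congr 1
        ring
    | add p q hp hq => simp [hp, hq]

/-- The set of the partial derivative operators `∂ᵢ` on `ℝ[x₁, …, xₙ]`. -/
def pdSet (n : ℕ) : Set (Module.End ℝ (MvPolynomial (Fin n) ℝ)) :=
  Set.range fun i : Fin n =>
    ((pderiv i : Derivation ℝ (MvPolynomial (Fin n) ℝ) (MvPolynomial (Fin n) ℝ)) :
      MvPolynomial (Fin n) ℝ →ₗ[ℝ] MvPolynomial (Fin n) ℝ)

instance pdCommRing (n : ℕ) : CommRing (Algebra.adjoin ℝ (pdSet n)) :=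
  Algebra.adjoinCommRingOfComm ℝ (by
    rintro _ ⟨i, rfl⟩ _ ⟨j, rfl⟩
    apply LinearMap.ext
    intro f
    exact pderiv_commute i j f)

/-- The algebra map sending a polynomial `f` (in the "∂ variables") to the differential
operator `f(∂₁, …, ∂ₙ)` acting on `ℝ[x₁, …, xₙ]`; thus `dop n f F` is the result of
applying the differential operator `f(∂₁, …, ∂ₙ)` to the polynomial `F`. -/
def dop (n : ℕ) : MvPolynomial (Fin n) ℝ →ₐ[ℝ] Module.End ℝ (MvPolynomial (Fin n) ℝ) :=
  (Algebra.adjoin ℝ (pdSet n)).val.comp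
    (aeval fun i : Fin n =>
      (⟨_, Algebra.subset_adjoin (Set.mem_range_self i)⟩ : Algebra.adjoin ℝ (pdSet n)))

/-- `Ann F`, the annihilator of `F`: the ideal of all differential-operator polynomials `f`
with `f(∂₁, …, ∂ₙ) F = 0`. -/
def annIdeal {n : ℕ} (F : MvPolynomial (Fin n) ℝ) : Ideal (MvPolynomial (Fin n) ℝ) where
  carrier := {f | dop n f F = 0}
  add_mem' := by
    intro a b ha hb
    simp only [Set.mem_setOf_eq] at *
    rw [map_add, LinearMap.add_apply, ha, hb, add_zero]
  zero_mem' := by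
    simp only [Set.mem_setOf_eq, map_zero, LinearMap.zero_apply]
  smul_mem' := by
    intro c f hf
    simp only [Set.mem_setOf_eq] at *
    rw [smul_eq_mul, map_mul, Module.End.mul_apply, hf, map_zero]

/-- The Artinian Gorenstein algebra `A_F = ℝ[∂₁, …, ∂ₙ]/Ann(F)`. -/
abbrev AF {n : ℕ} (F : MvPolynomial (Fin n) ℝ) := MvPolynomial (Fin n) ℝ ⧸ annIdeal F

/-- The degree-`k` homogeneous component `(A_F)_k` of `A_F`, as a submodule of `A_F`:
the image of the space of homogeneous polynomials of degree `k` under the quotient map. -/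
def gradeA {n : ℕ} (F : MvPolynomial (Fin n) ℝ) (k : ℕ) : Submodule ℝ (AF F) :=
  Submodule.map (Ideal.Quotient.mkₐ ℝ (annIdeal F)).toLinearMap
    (homogeneousSubmodule (Fin n) ℝ k)

/-- `ℓ ∈ A_F` is a strong Lefschetz element of `A_F` (with socle degree `s`) if the
multiplication map `×ℓ^(s-2k) : (A_F)_k → (A_F)_(s-k)` is bijective for every `k` with
`0 ≤ k ≤ s/2`. -/
def IsSLelem {n : ℕ} (F : MvPolynomial (Fin n) ℝ) (s : ℕ) (ℓ : AF F) : Prop :=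
  ∀ k : ℕ, 2 * k ≤ s →
    Set.BijOn (fun f => ℓ ^ (s - 2 * k) * f) (gradeA F k) (gradeA F (s - k))

/-- `A_F` (with socle degree `s`) has the strong Lefschetz property. -/
def HasSLP {n : ℕ} (F : MvPolynomial (Fin n) ℝ) (s : ℕ) : Prop :=
  ∃ ℓ ∈ gradeA F 1, IsSLelem F s ℓ

/-- `A_F` (with socle degree `s`) satisfies the Hodge–Riemann relation with respect to the
class `ℓ` of a linear form `L`: for every `k` with `0 ≤ k ≤ s/2`, the bilinear form
`Q^k_ℓ(f, g) = (-1)^k P^k(f, ℓ^(s-2k) g)` (where `P^k(f, g) = f g F` is the Poincaré duality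
pairing) is positive definite on the kernel of `×ℓ^(s-2k+1) : (A_F)_k → (A_F)_(s-k+1)`,
i.e. `Q^k_ℓ(f, f) > 0` for every nonzero `f ∈ (A_F)_k` in that kernel. -/
def SatisfiesHRR {n : ℕ} (F : MvPolynomial (Fin n) ℝ) (s : ℕ) (L : MvPolynomial (Fin n) ℝ) :
    Prop :=
  ∀ k : ℕ, 2 * k ≤ s →
    ∀ f ∈ homogeneousSubmodule (Fin n) ℝ k,
      dop n (L ^ (s - 2 * k + 1) * f) F = 0 →
      Ideal.Quotient.mk (annIdeal F) f ≠ 0 →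
      0 < (-1 : ℝ) ^ k * constantCoeff (dop n (L ^ (s - 2 * k) * f * f) F)

section Test
variable {n : ℕ}

/-- `∂ᵢ` as a linear endomorphism. -/
def pd (i : Fin n) : Module.End ℝ (MvPolynomial (Fin n) ℝ) :=
  ((pderiv i : Derivation ℝ (MvPolynomial (Fin n) ℝ) (MvPolynomial (Fin n) ℝ)) :
    MvPolynomial (Fin n) ℝ →ₗ[ℝ] MvPolynomial (Fin n) ℝ)

lemma pd_apply (i : Fin n) (f : MvPolynomial (Fin n) ℝ) : pd i f = pderiv i f := rfl

lemma dop_X (i : Fin n) (f : MvPolynomial (Fin n) ℝ) : dop n (X i) f = pderiv i f := by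
  rw [dop, AlgHom.comp_apply, aeval_X]; rfl

lemma dop_mul_apply (f g F : MvPolynomial (Fin n) ℝ) :
    dop n (f * g) F = dop n f (dop n g F) := by
  rw [map_mul]; rfl

lemma dop_one_apply (F : MvPolynomial (Fin n) ℝ) : dop n 1 F = F := by
  rw [map_one]; rfl

lemma dop_monomial_single_apply (i : Fin n) (b : ℕ) (α : Fin n →₀ ℕ)
    (F : MvPolynomial (Fin n) ℝ) :
    dop n (monomial (Finsupp.single i b + α) 1) F
      = dop n (monomial α 1) ((pd i ^ b) F) := by
  have h : (monomial (Finsupp.single i b + α) (1 : ℝ)) = monomial α 1 * (X i) ^ b := by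
    rw [X_pow_eq_monomial, monomial_mul, one_mul, add_comm]
  rw [h, dop_mul_apply]
  congr 1
  rw [map_pow]
  have h2 : dop n (X i) = pd i := LinearMap.ext fun f => dop_X i f
  rw [h2]

lemma coeff_pderiv' (i : Fin n) (β : Fin n →₀ ℕ) (f : MvPolynomial (Fin n) ℝ) :
    coeff β (pderiv i f) = ((β i : ℝ) + 1) * coeff (β + Finsupp.single i 1) f := by
  induction f using MvPolynomial.induction_on' with
  | add p q hp hq => simp [hp, hq, mul_add]
  | monomial u c =>
    rw [pderiv_monomial, coeff_monomial, coeff_monomial]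
    rcases eq_or_ne u (β + Finsupp.single i 1) with rfl | hne
    · have h1 : β + Finsupp.single i 1 - Finsupp.single i 1 = β := by
        ext j; rcases eq_or_ne j i with rfl | hj <;>
          simp [Finsupp.tsub_apply, Finsupp.single_eq_of_ne, *]
      rw [h1, if_pos rfl]
      simp only [Finsupp.add_apply, Finsupp.single_eq_same]
      push_cast
      ring
    · rw [if_neg hne]
      rcases eq_or_ne (u i) 0 with h0 | h0
      · rcases eq_or_ne (u - Finsupp.single i 1) β with he | he
        · simp [he, h0]
        · simp [he, h0]
      · have : u - Finsupp.single i 1 ≠ β := by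
          intro he
          apply hne
          ext j
          rcases eq_or_ne j i with rfl | hj
          · have := congrArg (fun m => m j) he
            simp only [Finsupp.tsub_apply, Finsupp.single_eq_same] at this
            simp only [Finsupp.add_apply, Finsupp.single_eq_same]
            omega
          · have := congrArg (fun m => m j) he
            simp only [Finsupp.tsub_apply, Finsupp.single_eq_of_ne' (Ne.symm hj),
              tsub_zero] at this
            simp [Finsupp.add_apply, Finsupp.single_eq_of_ne' (Ne.symm hj), this]
        rw [if_neg this]; simp


lemma degree_add' (β γ : Fin n →₀ ℕ) :
    Finsupp.degree (β + γ) = Finsupp.degree β + Finsupp.degree γ := by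
  rw [Finsupp.degree_eq_weight_one, map_add]

lemma degree_single' (i : Fin n) (b : ℕ) :
    Finsupp.degree (Finsupp.single i b) = b := by
  rw [Finsupp.degree_eq_weight_one, Finsupp.weight_apply,
    Finsupp.sum_single_index] <;> simp

lemma coeff_pd_pow (i : Fin n) (b : ℕ) (β : Fin n →₀ ℕ) (f : MvPolynomial (Fin n) ℝ) :
    coeff β ((pd i ^ b) f)
      = (∏ j ∈ Finset.range b, ((β i : ℝ) + 1 + j)) * coeff (β + Finsupp.single i b) f := by
  induction b generalizing f with
  | zero => simp
  | succ b ih =>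
    have h1 : pd i ^ (b + 1) = pd i ^ b * pd i := by rw [pow_succ]
    rw [h1, Module.End.mul_apply, ih, pd_apply, coeff_pderiv']
    have h2 : β + Finsupp.single i b + Finsupp.single i 1 = β + Finsupp.single i (b + 1) := by
      rw [add_assoc, ← Finsupp.single_add]
    have h3 : ((β + Finsupp.single i b) i : ℝ) = (β i : ℝ) + b := by
      simp only [Finsupp.add_apply, Finsupp.single_eq_same]; push_cast; ring
    rw [h2, h3, Finset.prod_range_succ]
    ring

lemma exists_const_dop_monomial (α : Fin n →₀ ℕ) :
    ∃ c : ℝ, 0 < c ∧ ∀ G : MvPolynomial (Fin n) ℝ,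
      constantCoeff (dop n (monomial α 1) G) = c * coeff α G := by
  induction α using Finsupp.induction with
  | zero =>
    refine ⟨1, one_pos, fun G => ?_⟩
    rw [show (monomial (0 : Fin n →₀ ℕ) (1:ℝ)) = 1 from rfl, dop_one_apply, one_mul]
    rfl
  | single_add i b α hia hb ih =>
    obtain ⟨c, hc, hG⟩ := ih
    refine ⟨c * (Nat.factorial b : ℝ), by positivity, fun G => ?_⟩
    rw [dop_monomial_single_apply, hG, coeff_pd_pow]
    have hα : α i = 0 := Finsupp.notMem_support_iff.mp hia
    have : (∏ j ∈ Finset.range b, ((α i : ℝ) + 1 + j)) = (Nat.factorial b : ℝ) := by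
      rw [hα]
      push_cast
      clear hb
      induction b with
      | zero => simp
      | succ b ihb => rw [Finset.prod_range_succ, ihb, Nat.factorial_succ]; push_cast; ring
    rw [this, add_comm α (Finsupp.single i b)]
    ring

lemma pderiv_homog {f : MvPolynomial (Fin n) ℝ} {t : ℕ} (i : Fin n)
    (hf : f.IsHomogeneous t) : (pderiv i f).IsHomogeneous (t - 1) := by
  intro β hβ
  rw [coeff_pderiv'] at hβ
  have h2 : coeff (β + Finsupp.single i 1) f ≠ 0 := by
    intro h; rw [h, mul_zero] at hβ; exact hβ rfl
  have h3 := hf h2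
  rw [show (Finsupp.weight (1 : Fin n → ℕ)) = Finsupp.weight fun _ => 1 from rfl,
    ← Finsupp.degree_eq_weight_one] at h3 ⊢
  rw [degree_add', degree_single'] at h3
  omega

lemma pd_pow_homog {f : MvPolynomial (Fin n) ℝ} {t : ℕ} (i : Fin n) (b : ℕ)
    (hf : f.IsHomogeneous t) : ((pd i ^ b) f).IsHomogeneous (t - b) := by
  induction b generalizing f t with
  | zero => simpa using hf
  | succ b ih =>
    rw [pow_succ, Module.End.mul_apply]
    have := ih (f := pderiv i f) (t := t - 1) (pderiv_homog i hf)
    rwa [show t - 1 - b = t - (b+1) by omega] at this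

lemma dop_monomial_homog {F : MvPolynomial (Fin n) ℝ} {s : ℕ} (α : Fin n →₀ ℕ)
    (hF : F.IsHomogeneous s) :
    (dop n (monomial α 1) F).IsHomogeneous (s - Finsupp.degree α) := by
  induction α using Finsupp.induction generalizing F s with
  | zero =>
    rw [show (monomial (0 : Fin n →₀ ℕ) (1:ℝ)) = 1 from rfl, dop_one_apply]
    simpa using hF
  | single_add i b α hia hb ih =>
    rw [dop_monomial_single_apply]
    have h2 : Finsupp.degree (Finsupp.single i b + α) = b + Finsupp.degree α := by
      rw [degree_add', degree_single']
    rw [h2]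
    have h1 := ih (pd_pow_homog i b hF)
    rwa [show s - b - Finsupp.degree α = s - (b + Finsupp.degree α) by omega] at h1

lemma dop_homog {f F : MvPolynomial (Fin n) ℝ} {t s : ℕ}
    (hf : f.IsHomogeneous t) (hF : F.IsHomogeneous s) :
    (dop n f F).IsHomogeneous (s - t) := by
  have hrep : f = ∑ α ∈ f.support, monomial α (coeff α f) :=
    (support_sum_monomial_coeff f).symm
  have : dop n f F = ∑ α ∈ f.support, (coeff α f) • dop n (monomial α 1) F := by
    conv_lhs => rw [hrep]
    rw [map_sum]
    simp only [LinearMap.coe_sum, Finset.sum_apply]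
    refine Finset.sum_congr rfl fun α hα => ?_
    have : (monomial α (coeff α f)) = (coeff α f) • monomial α (1:ℝ) := by
      rw [smul_monomial, smul_eq_mul, mul_one]
    rw [this, map_smul]
    rfl
  rw [this]
  have hsub : ∀ α ∈ f.support,
      (coeff α f) • dop n (monomial α 1) F ∈ homogeneousSubmodule (Fin n) ℝ (s - t) := by
    intro α hα
    have hdeg : Finsupp.degree α = t := by
      rw [Finsupp.degree_eq_weight_one]
      exact hf (mem_support_iff.mp hα)
    refine Submodule.smul_mem _ _ ?_
    rw [mem_homogeneousSubmodule, ← hdeg]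
    exact dop_monomial_homog α hF
  exact Submodule.sum_mem _ hsub
lemma degree_eq_sum_univ (m : Fin n →₀ ℕ) : Finsupp.degree m = ∑ i : Fin n, m i :=
  Finset.sum_subset (Finset.subset_univ _) (fun i _ hi => Finsupp.notMem_support_iff.mp hi)

lemma euler_monomial (a : Fin n → ℝ) (m : Fin n →₀ ℕ) (c : ℝ) :
    ∑ i : Fin n, a i * eval a (pderiv i (monomial m c))
      = ((Finsupp.degree m : ℕ) : ℝ) * eval a (monomial m c) := by
  have key : ∀ i : Fin n,
      a i * eval a (pderiv i (monomial m c)) = (m i : ℝ) * eval a (monomial m c) := by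
    intro i
    rw [pderiv_monomial, eval_monomial, eval_monomial, Finsupp.prod_pow, Finsupp.prod_pow]
    rcases Nat.eq_zero_or_pos (m i) with h0 | hpos
    · simp [h0]
    · set m' : Fin n →₀ ℕ := m - Finsupp.single i 1 with hm'
      have hm'i : m' i = m i - 1 := by simp [hm', Finsupp.tsub_apply]
      have hm'j : ∀ j : Fin n, j ≠ i → m' j = m j := by
        intro j hj
        rw [hm', Finsupp.tsub_apply, Finsupp.single_eq_of_ne' (Ne.symm hj), tsub_zero]
      have hprod : (∏ j : Fin n, a j ^ m j) = a i * ∏ j : Fin n, a j ^ m' j := by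
        rw [Finset.prod_eq_mul_prod_sdiff_singleton_of_mem (Finset.mem_univ i)
            (fun j => a j ^ m j),
          Finset.prod_eq_mul_prod_sdiff_singleton_of_mem (Finset.mem_univ i)
            (fun j => a j ^ m' j)]
        have h2 : ∀ j ∈ Finset.univ \ {i}, a j ^ m' j = a j ^ m j := fun j hj => by
          rw [hm'j j (by simpa using (Finset.mem_sdiff.mp hj).2)]
        rw [Finset.prod_congr rfl h2, hm'i, ← mul_assoc]
        congr 1
        conv_lhs => rw [show m i = 1 + (m i - 1) by omega]
        rw [pow_add, pow_one]
      rw [hprod]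
      push_cast
      ring
  rw [Finset.sum_congr rfl fun i _ => key i, ← Finset.sum_mul, degree_eq_sum_univ]
  push_cast
  ring

lemma euler_eval (a : Fin n → ℝ) {d : ℕ} {G : MvPolynomial (Fin n) ℝ}
    (hG : G.IsHomogeneous d) :
    ∑ i : Fin n, a i * eval a (pderiv i G) = (d : ℝ) * eval a G := by
  conv_lhs => rw [← support_sum_monomial_coeff G]
  conv_rhs => rw [← support_sum_monomial_coeff G]
  rw [map_sum]
  simp only [map_sum, Finset.mul_sum]
  rw [Finset.sum_comm]
  refine Finset.sum_congr rfl fun α hα => ?_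
  have hdeg : Finsupp.degree α = d := by
    rw [Finsupp.degree_eq_weight_one]
    exact hG (mem_support_iff.mp hα)
  rw [← hdeg]
  simpa using euler_monomial a α (coeff α G)

lemma homog_zero_eq_C {G : MvPolynomial (Fin n) ℝ} (hG : G.IsHomogeneous 0) :
    G = C (constantCoeff G) := by
  ext m
  rw [coeff_C]
  rcases eq_or_ne (0 : Fin n →₀ ℕ) m with rfl | hm
  · rw [if_pos rfl]; rfl
  · rw [if_neg hm]
    by_contra hc
    have := hG hc
    rw [show (Finsupp.weight (1 : Fin n → ℕ)) = Finsupp.weight fun _ => 1 from rfl,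
      ← Finsupp.degree_eq_weight_one, Finsupp.degree_eq_zero_iff] at this
    exact hm this.symm

lemma dop_C_mul_X_apply (c : ℝ) (i : Fin n) (G : MvPolynomial (Fin n) ℝ) :
    dop n (C c * X i) G = c • pderiv i G := by
  rw [dop_mul_apply, dop_X]
  have : (C c : MvPolynomial (Fin n) ℝ) = algebraMap ℝ _ c := rfl
  rw [this, AlgHom.commutes]
  simp [Algebra.algebraMap_eq_smul_one]

lemma const_dop_L_pow (a : Fin n → ℝ) {d : ℕ} {G : MvPolynomial (Fin n) ℝ}
    (hG : G.IsHomogeneous d) :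
    constantCoeff (dop n ((∑ i : Fin n, C (a i) * X i) ^ d) G)
      = (Nat.factorial d : ℝ) * eval a G := by
  induction d generalizing G with
  | zero =>
    rw [pow_zero, dop_one_apply, homog_zero_eq_C hG]
    simp
  | succ d ih =>
    have hL : ((∑ i : Fin n, C (a i) * X i) ^ (d+1))
        = (∑ i : Fin n, C (a i) * X i) ^ d * (∑ i : Fin n, C (a i) * X i) := pow_succ _ _
    rw [hL, dop_mul_apply]
    have hLG : dop n (∑ i : Fin n, C (a i) * X i) G = ∑ i : Fin n, a i • pderiv i G := by
      rw [map_sum]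
      simp only [LinearMap.coe_sum, Finset.sum_apply]
      exact Finset.sum_congr rfl fun i _ => dop_C_mul_X_apply (a i) i G
    rw [hLG]
    have hhom : (∑ i : Fin n, a i • pderiv i G).IsHomogeneous d := by
      have : ∀ i ∈ Finset.univ, (a i • pderiv i G) ∈ homogeneousSubmodule (Fin n) ℝ d := by
        intro i _
        refine Submodule.smul_mem _ _ ?_
        rw [mem_homogeneousSubmodule]
        simpa using pderiv_homog i hG
      exact Submodule.sum_mem _ this
    rw [ih hhom]
    have : eval a (∑ i : Fin n, a i • pderiv i G) = ∑ i : Fin n, a i * eval a (pderiv i G) := by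
      rw [map_sum]
      exact Finset.sum_congr rfl fun i _ => by rw [smul_eq_C_mul, map_mul, eval_C]
    rw [this, euler_eval a hG, Nat.factorial_succ]
    push_cast
    ring
/-- `constantCoeff` as an `ℝ`-linear map. -/
def constLin : MvPolynomial (Fin n) ℝ →ₗ[ℝ] ℝ where
  toFun := constantCoeff
  map_add' f g := by simp
  map_smul' c f := by
    simp [smul_eq_C_mul]

/-- `f ↦ dop n f F` as a linear map. -/
def Tmap (F : MvPolynomial (Fin n) ℝ) : MvPolynomial (Fin n) ℝ →ₗ[ℝ] MvPolynomial (Fin n) ℝ :=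
  (LinearMap.applyₗ F).comp (dop n).toLinearMap

lemma Tmap_apply (F f : MvPolynomial (Fin n) ℝ) : Tmap F f = dop n f F := rfl

lemma Tmap_ker (F : MvPolynomial (Fin n) ℝ) :
    Submodule.restrictScalars ℝ (annIdeal F) ≤ LinearMap.ker (Tmap F) := by
  intro f hf
  exact hf

/-- The descent of `f ↦ dop n f F` to `A_F`. -/
def Dmap (F : MvPolynomial (Fin n) ℝ) : AF F →ₗ[ℝ] MvPolynomial (Fin n) ℝ :=
  (Submodule.liftQ (Submodule.restrictScalars ℝ (annIdeal F)) (Tmap F) (Tmap_ker F)).comp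
    (Submodule.Quotient.restrictScalarsEquiv ℝ (annIdeal F)).symm.toLinearMap

lemma Dmap_mk (F f : MvPolynomial (Fin n) ℝ) :
    Dmap F (Ideal.Quotient.mk (annIdeal F) f) = dop n f F := rfl

/-- The pairing `(u, v) ↦ constantCoeff (dop (u v) F)` on `A_F`. -/
def pairing (F : MvPolynomial (Fin n) ℝ) : AF F →ₗ[ℝ] AF F →ₗ[ℝ] ℝ :=
  (LinearMap.mul ℝ (AF F)).compr₂ (constLin.comp (Dmap F))

lemma pairing_mk (F f g : MvPolynomial (Fin n) ℝ) :
    pairing F (Ideal.Quotient.mk (annIdeal F) f) (Ideal.Quotient.mk (annIdeal F) g)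
      = constantCoeff (dop n (f * g) F) := by
  have : (Ideal.Quotient.mk (annIdeal F) f) * (Ideal.Quotient.mk (annIdeal F) g)
      = Ideal.Quotient.mk (annIdeal F) (f * g) := (map_mul _ _ _).symm
  simp only [pairing, LinearMap.compr₂_apply, LinearMap.mul_apply', this]
  rw [LinearMap.comp_apply, Dmap_mk]
  rfl

lemma pairing_nondeg {F : MvPolynomial (Fin n) ℝ} {s t : ℕ} (hF : F.IsHomogeneous s)
    (ht : t ≤ s) {g : MvPolynomial (Fin n) ℝ} (hg : g.IsHomogeneous (s - t))
    (hne : Ideal.Quotient.mk (annIdeal F) g ≠ 0) :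
    ∃ h : MvPolynomial (Fin n) ℝ, h.IsHomogeneous t ∧
      constantCoeff (dop n (h * g) F) ≠ 0 := by
  have hG : dop n g F ≠ 0 := by
    intro h0
    exact hne (Ideal.Quotient.eq_zero_iff_mem.mpr h0)
  have hGhom : (dop n g F).IsHomogeneous t := by
    have := dop_homog hg hF
    rwa [show s - (s - t) = t by omega] at this
  obtain ⟨α, hα⟩ := ne_zero_iff.mp hG
  have hdeg : Finsupp.degree α = t := by
    rw [Finsupp.degree_eq_weight_one]; exact hGhom hα
  obtain ⟨c, hc, hcoeff⟩ := exists_const_dop_monomial (n := n) α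
  refine ⟨monomial α 1, isHomogeneous_monomial 1 hdeg, ?_⟩
  rw [dop_mul_apply, hcoeff]
  exact mul_ne_zero (ne_of_gt hc) hα
end Test

set_option maxHeartbeats 1000000 in
set_option synthInstance.maxHeartbeats 1000000 in
/-- **Watanabe, Maeno–Watanabe.** Let `F` be a nonzero homogeneous polynomial of degree `s`
and `A_F = ℝ[∂₁,…,∂ₙ]/Ann(F)`, and fix `k` with `0 ≤ k ≤ s/2`. Let `e₁, …, eₘ` be
homogeneous polynomials of degree `k` whose classes form a basis of `(A_F)_k`, and let
`H^k_F = (eᵢ eⱼ F)` be the `k`-th Hessian matrix of `F` with respect to this basis. Then for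
`a ∈ ℝⁿ` and `ℓ_a = a₁∂₁ + ⋯ + aₙ∂ₙ`, the multiplication map
`×ℓ_a^(s-2k) : (A_F)_k → (A_F)_(s-k)` is bijective iff `det H^k_F(a) ≠ 0`. -/
theorem multiplication_bijective_iff_hessian_ne_zero
    {n s k m : ℕ} (F : MvPolynomial (Fin n) ℝ)
    (hF : F ∈ homogeneousSubmodule (Fin n) ℝ s) (hF0 : F ≠ 0) (hk : 2 * k ≤ s)
    (e : Fin m → MvPolynomial (Fin n) ℝ)
    (he : ∀ i, e i ∈ homogeneousSubmodule (Fin n) ℝ k)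
    (hind : LinearIndependent ℝ fun i => Ideal.Quotient.mk (annIdeal F) (e i))
    (hspan : Submodule.span ℝ
        (Set.range fun i => Ideal.Quotient.mk (annIdeal F) (e i)) = gradeA F k)
    (a : Fin n → ℝ) :
    Set.BijOn
        (fun f => Ideal.Quotient.mk (annIdeal F) (∑ i, C (a i) * X i) ^ (s - 2 * k) * f)
        (gradeA F k) (gradeA F (s - k)) ↔
      (Matrix.of fun i j : Fin m => eval a (dop n (e i * e j) F)).det ≠ 0 := by
  classical
  have hFh : F.IsHomogeneous s := hF
  set L : MvPolynomial (Fin n) ℝ := ∑ i, C (a i) * X i with hLdef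
  set d : ℕ := s - 2 * k with hddef
  set mk : MvPolynomial (Fin n) ℝ →+* AF F := Ideal.Quotient.mk (annIdeal F) with hmkdef
  have hLhom : L.IsHomogeneous 1 := by
    apply IsHomogeneous.sum
    intro i _
    simpa using (isHomogeneous_X ℝ i).C_mul (a i)
  -- membership in gradeA
  have hmem_gradeA : ∀ (t : ℕ) (u : AF F), u ∈ gradeA F t ↔
      ∃ f, f.IsHomogeneous t ∧ mk f = u := by
    intro t u
    constructor
    · rintro ⟨f, hf, rfl⟩
      exact ⟨f, hf, rfl⟩
    · rintro ⟨f, hf, rfl⟩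
      exact ⟨f, hf, rfl⟩
  have hmul_mem : ∀ x ∈ gradeA F k, (mk L) ^ d * x ∈ gradeA F (s - k) := by
    intro x hx
    obtain ⟨f, hf, rfl⟩ := (hmem_gradeA k x).mp hx
    refine (hmem_gradeA (s - k) _).mpr ⟨L ^ d * f, ?_, by rw [map_mul, map_pow]⟩
    have := (hLhom.pow d).mul hf
    rwa [show 1 * d + k = s - k by omega] at this
  -- the multiplication map as a linear map
  set φ : gradeA F k →ₗ[ℝ] gradeA F (s - k) :=
    (LinearMap.mul ℝ (AF F) ((mk L) ^ d)).restrict hmul_mem with hφdef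
  have hφval : ∀ x : gradeA F k, (φ x : AF F) = (mk L) ^ d * (x : AF F) := by
    intro x; rfl
  -- basis of gradeA F k
  have hmemk : ∀ i, mk (e i) ∈ gradeA F k := fun i =>
    (hmem_gradeA k _).mpr ⟨e i, he i, rfl⟩
  set vK : Fin m → gradeA F k := fun i => ⟨mk (e i), hmemk i⟩ with hvKdef
  have hvKli : LinearIndependent ℝ vK := by
    apply LinearIndependent.of_comp (gradeA F k).subtype
    exact hind
  have hvKsp : ⊤ ≤ Submodule.span ℝ (Set.range vK) := by
    have hmapinj := Submodule.map_injective_of_injective (gradeA F k).injective_subtype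
    have hmap : Submodule.map (gradeA F k).subtype (Submodule.span ℝ (Set.range vK))
        = Submodule.map (gradeA F k).subtype ⊤ := by
      rw [Submodule.map_span, Submodule.map_subtype_top]
      rw [show (gradeA F k).subtype '' Set.range vK = Set.range fun i => mk (e i) by
        rw [← Set.range_comp]; rfl]
      exact hspan
    exact (hmapinj hmap).ge
  set b : Module.Basis (Fin m) ℝ (gradeA F k) := Module.Basis.mk hvKli hvKsp with hbdef
  have hfinK : Module.finrank ℝ (gradeA F k) = m := by
    rw [Module.finrank_eq_card_basis b, Fintype.card_fin]
  haveI : FiniteDimensional ℝ (gradeA F k) := Module.Finite.of_basis b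
  -- the evaluation map ψ : (A_F)_{s-k} → ℝ^m
  set ψ : gradeA F (s - k) →ₗ[ℝ] (Fin m → ℝ) :=
    LinearMap.pi (fun i => (pairing F (mk (e i))).comp (gradeA F (s - k)).subtype)
    with hψdef
  have hψapp : ∀ (v : gradeA F (s - k)) (i : Fin m),
      ψ v i = pairing F (mk (e i)) (v : AF F) := fun v i => rfl
  -- nondegeneracy: ψ is injective
  have hψinj : Function.Injective ψ := by
    rw [injective_iff_map_eq_zero]
    intro v hv
    have hall0 : ∀ u ∈ Submodule.span ℝ (Set.range fun i => mk (e i)),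
        pairing F u (v : AF F) = 0 := by
      intro u hu
      induction hu using Submodule.span_induction with
      | mem x hx =>
        obtain ⟨i, rfl⟩ := hx
        have := congrFun hv i
        simpa [hψapp] using this
      | zero => simp
      | add x y _ _ hx hy => rw [map_add, LinearMap.add_apply, hx, hy, add_zero]
      | smul c x _ hx => rw [map_smul, LinearMap.smul_apply, hx, smul_zero]
    have hall : ∀ u ∈ gradeA F k, pairing F u (v : AF F) = 0 := by
      rw [← hspan]; exact hall0
    ext
    rw [Submodule.coe_zero]
    obtain ⟨g, hg, hgv⟩ := (hmem_gradeA (s - k) (v : AF F)).mp v.2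
    by_contra hne
    rw [← hgv] at hne
    obtain ⟨h, hhom, hc⟩ := pairing_nondeg (t := k) hFh (by omega : k ≤ s) hg hne
    apply hc
    have hmemh : mk h ∈ gradeA F k := (hmem_gradeA k _).mpr ⟨h, hhom, rfl⟩
    have := hall (mk h) hmemh
    rw [← hgv, pairing_mk] at this
    exact this
  haveI : FiniteDimensional ℝ (gradeA F (s - k)) :=
    FiniteDimensional.of_injective ψ hψinj
  have hfinle : Module.finrank ℝ (gradeA F (s - k)) ≤ m := by
    have := LinearMap.finrank_le_finrank_of_injective hψinj
    rwa [Module.finrank_fin_fun] at this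
  -- the map into the dual : (A_F)_k → Dual (A_F)_{s-k}
  set χ : gradeA F k →ₗ[ℝ] Module.Dual ℝ (gradeA F (s - k)) :=
    (((pairing F).comp (gradeA F k).subtype).compl₂ (gradeA F (s - k)).subtype) with hχdef
  have hχinj : Function.Injective χ := by
    rw [injective_iff_map_eq_zero]
    intro u hu
    ext
    rw [Submodule.coe_zero]
    obtain ⟨f, hf, hfu⟩ := (hmem_gradeA k (u : AF F)).mp u.2
    by_contra hne
    rw [← hfu] at hne
    have hf' : f.IsHomogeneous (s - (s - k)) := by
      rwa [show s - (s - k) = k by omega]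
    obtain ⟨h, hhom, hc⟩ := pairing_nondeg hFh (by omega : s - k ≤ s) hf' hne
    apply hc
    have hmemh : mk h ∈ gradeA F (s - k) := (hmem_gradeA (s - k) _).mpr ⟨h, hhom, rfl⟩
    have := congrFun (congrArg DFunLike.coe hu) ⟨mk h, hmemh⟩
    simp only [hχdef, LinearMap.compl₂_apply, LinearMap.comp_apply,
      Submodule.coe_subtype, LinearMap.zero_apply] at this
    rw [← hfu, pairing_mk, mul_comm f h] at this
    exact this
  have hfinge : m ≤ Module.finrank ℝ (gradeA F (s - k)) := by
    have h1 := LinearMap.finrank_le_finrank_of_injective hχinj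
    rw [hfinK, Subspace.dual_finrank_eq] at h1
    exact h1
  have hfinSK : Module.finrank ℝ (gradeA F (s - k)) = m := le_antisymm hfinle hfinge
  -- ψ is bijective
  have hψbij : Function.Bijective ψ := by
    refine ⟨hψinj, ?_⟩
    rw [← LinearMap.injective_iff_surjective_of_finrank_eq_finrank
      (by rw [hfinSK, Module.finrank_fin_fun])]
    exact hψinj
  -- the matrix of ψ ∘ₗ φ
  set pib : Module.Basis (Fin m) ℝ (Fin m → ℝ) := Pi.basisFun ℝ (Fin m) with hpibdef
  set A : Matrix (Fin m) (Fin m) ℝ := LinearMap.toMatrix b pib (ψ ∘ₗ φ) with hAdef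
  have hAentry : ∀ i j, A i j
      = (Nat.factorial d : ℝ) * eval a (dop n (e i * e j) F) := by
    intro i j
    rw [hAdef, LinearMap.toMatrix_apply, hpibdef, Pi.basisFun_repr]
    have hbj : b j = vK j := by rw [hbdef]; exact Module.Basis.mk_apply hvKli hvKsp j
    rw [LinearMap.comp_apply, hbj, hψapp]
    have hφv : ((φ (vK j)) : AF F) = mk L ^ d * mk (e j) := hφval _
    rw [hφv]
    have h2 : mk L ^ d * mk (e j) = mk (L ^ d * e j) := by rw [map_mul, map_pow]
    rw [h2, pairing_mk]
    have h3 : e i * (L ^ d * e j) = L ^ d * (e i * e j) := by ring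
    rw [h3, dop_mul_apply]
    have hGhom : (dop n (e i * e j) F).IsHomogeneous d := by
      have := dop_homog ((he i).mul (he j)) hFh
      rwa [show s - (k + k) = d by omega] at this
    rw [hLdef]
    exact const_dop_L_pow a hGhom
  -- BijOn ↔ Bijective φ
  have hBij : Set.BijOn (fun f => mk L ^ d * f) (gradeA F k) (gradeA F (s - k))
      ↔ Function.Bijective φ := by
    constructor
    · rintro ⟨hmap, hinj, hsur⟩
      constructor
      · intro x y hxy
        have hval : mk L ^ d * (x : AF F) = mk L ^ d * (y : AF F) := by
          have h := congrArg Subtype.val hxy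
          rw [hφval, hφval] at h; exact h
        exact Subtype.ext (hinj x.2 y.2 hval)
      · intro y
        obtain ⟨x, hx, hxy⟩ := hsur y.2
        exact ⟨⟨x, hx⟩, Subtype.ext hxy⟩
    · rintro ⟨hinj, hsur⟩
      refine ⟨hmul_mem, ?_, ?_⟩
      · intro x hx y hy hxy
        have h : φ ⟨x, hx⟩ = φ ⟨y, hy⟩ := Subtype.ext (by rw [hφval, hφval]; exact hxy)
        exact congrArg Subtype.val (hinj h)
      · intro y hy
        obtain ⟨x, hx⟩ := hsur ⟨y, hy⟩
        refine ⟨x.1, x.2, ?_⟩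
        show mk L ^ d * (x : AF F) = y
        rw [← hφval x, hx]
  have hcoe : ⇑(ψ ∘ₗ φ) = ⇑ψ ∘ ⇑φ := LinearMap.coe_comp ψ φ
  have hcomp : Function.Bijective φ ↔ Function.Bijective (ψ ∘ₗ φ) := by
    constructor
    · intro h; rw [hcoe]; exact hψbij.comp h
    · intro h
      constructor
      · intro x y hxy
        apply h.1
        rw [hcoe]; simp only [Function.comp_apply, hxy]
      · intro y
        obtain ⟨x, hx⟩ := h.2 (ψ y)
        rw [hcoe] at hx
        exact ⟨x, hψbij.1 hx⟩
  -- Bijective (ψ ∘ₗ φ) ↔ det A ≠ 0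
  have hrepr : ∀ x : gradeA F k, A.mulVec (b.repr x) = ψ (φ x) := by
    intro x
    have := LinearMap.toMatrix_mulVec_repr b pib (ψ ∘ₗ φ) x
    rw [← hAdef] at this
    rw [this]
    ext i
    rw [hpibdef, Pi.basisFun_repr, LinearMap.comp_apply]
  have hmat : Function.Bijective (ψ ∘ₗ φ) ↔ A.det ≠ 0 := by
    constructor
    · intro hbij hdet0
      obtain ⟨w, hw0, hww⟩ := Matrix.exists_mulVec_eq_zero_iff.mpr hdet0
      have hbx : ⇑(b.repr (b.repr.symm (Finsupp.equivFunOnFinite.symm w))) = w := by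
        rw [LinearEquiv.apply_symm_apply]
        exact Finsupp.equivFunOnFinite.apply_symm_apply w
      have hx0 : (ψ ∘ₗ φ) (b.repr.symm (Finsupp.equivFunOnFinite.symm w)) = 0 := by
        rw [LinearMap.comp_apply, ← hrepr, hbx, hww]
      have hz : b.repr.symm (Finsupp.equivFunOnFinite.symm w) = 0 := by
        apply hbij.1
        rw [hx0, map_zero]
      apply hw0
      rw [← hbx, hz, map_zero, Finsupp.coe_zero]
    · intro hdet
      have hinj : Function.Injective (ψ ∘ₗ φ) := by
        rw [injective_iff_map_eq_zero]
        intro x hx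
        have h0 : A.mulVec (b.repr x) = 0 := by
          rw [hrepr, ← LinearMap.comp_apply, hx]
        have hw : ⇑(b.repr x) = 0 := by
          by_contra hne
          exact hdet (Matrix.exists_mulVec_eq_zero_iff.mp ⟨_, hne, h0⟩)
        have hr : b.repr x = 0 := Finsupp.coe_eq_zero.mp hw
        exact b.repr.map_eq_zero_iff.mp hr
      refine ⟨hinj, ?_⟩
      rw [← LinearMap.injective_iff_surjective_of_finrank_eq_finrank
        (by rw [hfinK, Module.finrank_fin_fun])]
      exact hinj
  rw [hBij, hcomp, hmat]
  have hsmul : A = (Nat.factorial d : ℝ)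
      • (Matrix.of fun i j : Fin m => eval a (dop n (e i * e j) F)) := by
    ext i j
    rw [hAentry i j]
    rfl
  rw [hsmul, Matrix.det_smul, Fintype.card_fin]
  constructor
  · intro h hM
    rw [hM, mul_zero] at h
    exact h rfl
  · intro h
    exact mul_ne_zero (pow_ne_zero _ (Nat.cast_ne_zero.mpr (Nat.factorial_ne_zero d))) h

end
end

section
/- Let F_hex = x1x2x3x4 + x2x3x6x7 + x3x4x7x8 + x1x4x5x8 + x1x2x5x6 + x5x6x7x8 ∈ ℝ[x_1,…,x_8]. The 8×8 Hessian matrix H = ((∂²F_hex/∂x_i∂x_j)(1,1,…,1))_{1≤i,j≤8} has eigenvalues 9, 1, and −3, with eigenspaces of dimensions 1, 3, and 4 respectively; equivalently, its characteristic polynomial is (x−9)(x−1)^3(x+3)^4. -/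
open MvPolynomial

noncomputable section

/-- The facet polynomial of the regular hexahedron (cube)
(vertices `0,…,7` standing for `1,…,8`). -/
def Fhex : MvPolynomial (Fin 8) ℝ :=
  X 0 * X 1 * X 2 * X 3 + X 1 * X 2 * X 5 * X 6 + X 2 * X 3 * X 6 * X 7 +
    X 0 * X 3 * X 4 * X 7 + X 0 * X 1 * X 4 * X 5 + X 4 * X 5 * X 6 * X 7

/-- The Hessian matrix of `Fhex` at the all-ones point, over `ℤ`. -/
def MZhex : Matrix (Fin 8) (Fin 8) ℤ :=
  !![0,2,1,2,2,1,0,1;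
     2,0,2,1,1,2,1,0;
     1,2,0,2,0,1,2,1;
     2,1,2,0,1,0,1,2;
     2,1,0,1,0,2,1,2;
     1,2,1,0,2,0,2,1;
     0,1,2,1,1,2,0,2;
     1,0,1,2,2,1,2,0]

/-- Eigenvector matrix for `MZhex` (columns are eigenvectors). -/
def PZhex : Matrix (Fin 8) (Fin 8) ℤ :=
  !![1,0,-1,0,-1,1,1,0;
     1,0,0,-1,1,-1,0,1;
     1,-1,1,-1,-1,0,-1,-1;
     1,-1,0,0,1,0,0,0;
     1,1,-1,1,0,-1,-1,-1;
     1,1,0,0,0,1,0,0;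
     1,0,1,0,0,0,1,0;
     1,0,0,1,0,0,0,1]

/-- Eight times the inverse of `PZhex`. -/
def QZhex : Matrix (Fin 8) (Fin 8) ℤ :=
  !![1,1,1,1,1,1,1,1;
     -1,1,-1,-3,1,3,1,-1;
     -3,-1,1,-1,-1,1,3,1;
     -1,-3,-1,1,1,-1,1,3;
     -2,0,-2,4,0,2,0,-2;
     0,-2,0,2,-2,4,-2,0;
     2,0,-2,0,0,-2,4,-2;
     0,2,0,-2,-2,0,-2,4]

/-- The vector of eigenvalues `9, 1, 1, 1, -3, -3, -3, -3`. -/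
def dvec : Fin 8 → ℤ := ![9,1,1,1,-3,-3,-3,-3]

lemma hexZ_PQ : PZhex * QZhex = Matrix.diagonal (fun _ => 8) := by decide
lemma hexZ_MP : MZhex * PZhex = PZhex * Matrix.diagonal dvec := by decide

/-- The real matrices obtained by casting. -/
def Mhex : Matrix (Fin 8) (Fin 8) ℝ := MZhex.map ((↑) : ℤ → ℝ)
def Phex : Matrix (Fin 8) (Fin 8) ℝ := PZhex.map ((↑) : ℤ → ℝ)
def Qhex : Matrix (Fin 8) (Fin 8) ℝ := (8 : ℝ)⁻¹ • QZhex.map ((↑) : ℤ → ℝ)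
def Dhex : Matrix (Fin 8) (Fin 8) ℝ := Matrix.diagonal fun i => ((dvec i : ℤ) : ℝ)

lemma cast_mat_mul (A B : Matrix (Fin 8) (Fin 8) ℤ) :
    (A * B).map ((↑) : ℤ → ℝ) = A.map ((↑) : ℤ → ℝ) * B.map ((↑) : ℤ → ℝ) :=
  Matrix.map_mul (f := Int.castRingHom ℝ)

lemma cast_mat_diag (d : Fin 8 → ℤ) :
    (Matrix.diagonal d).map ((↑) : ℤ → ℝ) = Matrix.diagonal fun i => ((d i : ℤ) : ℝ) :=
  Matrix.diagonal_map (by norm_num)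

lemma hex_PQ : Phex * Qhex = 1 := by
  rw [Phex, Qhex, Matrix.mul_smul, ← cast_mat_mul, hexZ_PQ, cast_mat_diag]
  ext i j
  rcases eq_or_ne i j with rfl | hij
  · simp only [Matrix.smul_apply, Matrix.diagonal_apply_eq, Matrix.one_apply_eq, smul_eq_mul]
    norm_num
  · simp [Matrix.diagonal_apply_ne _ hij, Matrix.one_apply_ne hij]

lemma hex_MP : Mhex * Phex = Phex * Dhex := by
  rw [Mhex, Phex, Dhex, ← cast_mat_mul, hexZ_MP, cast_mat_mul, cast_mat_diag]

set_option maxHeartbeats 2000000 in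
set_option maxRecDepth 16000 in
lemma hex_hessian_eq :
    (Matrix.of fun i j : Fin 8 =>
        eval (fun _ => (1 : ℝ)) (pderiv i (pderiv j Fhex))) = Mhex := by
  ext i j
  show eval (fun _ => (1 : ℝ)) (pderiv i (pderiv j Fhex)) = ((MZhex i j : ℤ) : ℝ)
  fin_cases i <;> fin_cases j <;>
    (simp [Fhex, MZhex, pderiv_mul, pderiv_X, Pi.single_apply] <;> try norm_num) <;>
    (try norm_cast) <;> (try decide)

def dvecR : Fin 8 → ℝ := fun i => ((dvec i : ℤ) : ℝ)

lemma hex_MP' : Mhex * Phex = Phex * Matrix.diagonal dvecR := by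
  show Mhex * Phex = Phex * Matrix.diagonal fun i => ((dvec i : ℤ) : ℝ)
  rw [Mhex, Phex, ← cast_mat_mul, hexZ_MP, cast_mat_mul, cast_mat_diag]

lemma charpoly_of_diagonalizable {n : Type*} [Fintype n] [DecidableEq n]
    (M P Q : Matrix n n ℝ) (d : n → ℝ)
    (hPQ : P * Q = 1) (hMP : M * P = P * Matrix.diagonal d) :
    M.charpoly = ∏ i, (Polynomial.X - Polynomial.C (d i)) := by
  have hdetP : P.det ≠ 0 := fun h => by
    have h1 : P.det * Q.det = 1 := by rw [← Matrix.det_mul, hPQ, Matrix.det_one]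
    rw [h, zero_mul] at h1
    exact zero_ne_one h1
  have key : Matrix.charmatrix M * P.map Polynomial.C =
      P.map Polynomial.C * Matrix.charmatrix (Matrix.diagonal d) := by
    rw [Matrix.charmatrix, Matrix.charmatrix, sub_mul, mul_sub]
    congr 1
    · exact (Matrix.scalar_commute Polynomial.X
        (fun r' => Commute.all Polynomial.X r') (P.map Polynomial.C)).eq
    · simp only [RingHom.mapMatrix_apply]
      rw [← Matrix.map_mul, ← Matrix.map_mul, hMP]
  have hD : (Matrix.charmatrix (Matrix.diagonal d)).det =
      ∏ i, (Polynomial.X - Polynomial.C (d i)) := by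
    have h2 : Matrix.charmatrix (Matrix.diagonal d) =
        Matrix.diagonal fun i => Polynomial.X - Polynomial.C (d i) := by
      ext i j
      rcases eq_or_ne i j with rfl | hij
      · rw [Matrix.charmatrix_apply_eq, Matrix.diagonal_apply_eq, Matrix.diagonal_apply_eq]
      · rw [Matrix.charmatrix_apply_ne _ _ _ hij, Matrix.diagonal_apply_ne _ hij,
          Matrix.diagonal_apply_ne _ hij, map_zero, neg_zero]
    rw [h2, Matrix.det_diagonal]
  have hdet := congrArg Matrix.det key
  rw [Matrix.det_mul, Matrix.det_mul,
    show (P.map Polynomial.C).det = Polynomial.C P.det from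
      (RingHom.map_det Polynomial.C P).symm,
    mul_comm (Matrix.charmatrix M).det (Polynomial.C P.det)] at hdet
  have hC : (Polynomial.C P.det : Polynomial ℝ) ≠ 0 := fun hc => hdetP (by simpa using hc)
  have hcancel := mul_left_cancel₀ hC hdet
  rw [Matrix.charpoly, hcancel, hD]

/-- The Hessian matrix of the facet polynomial of the cube, evaluated at the all-ones point,
has eigenvalues `9`, `1`, `-3` with eigenspaces of dimensions `1`, `3`, `4`: equivalently,
its characteristic polynomial is `(x-9)(x-1)³(x+3)⁴`. -/
theorem hexahedron_hessian_eigenvalues :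
    (Matrix.of fun i j : Fin 8 =>
        eval (fun _ => (1 : ℝ)) (pderiv i (pderiv j Fhex))).charpoly =
      (Polynomial.X - Polynomial.C 9) * (Polynomial.X - Polynomial.C 1) ^ 3 *
        (Polynomial.X + Polynomial.C 3) ^ 4 := by
  rw [hex_hessian_eq, charpoly_of_diagonalizable Mhex Phex Qhex dvecR hex_PQ hex_MP',
    Fin.prod_univ_eight]
  rw [show dvecR 0 = 9 from by rw [dvecR, show dvec 0 = 9 from by decide]; norm_num,
    show dvecR 1 = 1 from by rw [dvecR, show dvec 1 = 1 from by decide]; norm_num,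
    show dvecR 2 = 1 from by rw [dvecR, show dvec 2 = 1 from by decide]; norm_num,
    show dvecR 3 = 1 from by rw [dvecR, show dvec 3 = 1 from by decide]; norm_num,
    show dvecR 4 = -3 from by rw [dvecR, show dvec 4 = -3 from by decide]; norm_num,
    show dvecR 5 = -3 from by rw [dvecR, show dvec 5 = -3 from by decide]; norm_num,
    show dvecR 6 = -3 from by rw [dvecR, show dvec 6 = -3 from by decide]; norm_num,
    show dvecR 7 = -3 from by rw [dvecR, show dvec 7 = -3 from by decide]; norm_num]
  simp only [map_neg]
  ring

end
end
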